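/- For all integers k ≥ 1 and n ≥ 1, the k-riffle shuffle measure is a probability measure: Σ_{π ∈ S_n} binom(n+k−d(π)−1, n)/k^n = 1. -/

import Mathlib

/-- Number of descents of a permutation of `{1,...,n}` (here `Fin n`, 0-indexed):
the number of positions `i` with `1 ≤ i ≤ n-1` and `π(i) > π(i+1)`. -/
def numDescents (n : ℕ) (π : Equiv.Perm (Fin n)) : ℕ :=
  ((Finset.range (n - 1)).filter (fun i =>
    ∃ h : i + 1 < n, π ⟨i + 1, h⟩ < π ⟨i, Nat.lt_of_succ_lt h⟩)).card

/-- `π` has a cyclic descent at `n` if `π(n) > π(1)`. -/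
def hasCyclicDescentAtLast (n : ℕ) (π : Equiv.Perm (Fin n)) : Prop :=
  ∃ h : 0 < n, π ⟨0, h⟩ < π ⟨n - 1, Nat.sub_lt h Nat.one_pos⟩

instance (n : ℕ) (π : Equiv.Perm (Fin n)) : Decidable (hasCyclicDescentAtLast n π) :=
  exists_prop_decidable _

/-- Number of cyclic descents: `d(π)+1` if `π` has a cyclic descent at `n`, else `d(π)`. -/
def numCyclicDescents (n : ℕ) (π : Equiv.Perm (Fin n)) : ℕ :=
  numDescents n π + if hasCyclicDescentAtLast n π then 1 else 0

/-- The k-riffle shuffle measure `R_{k,n}(π) = binom(n+k-d(π)-1, n) / k^n`. -/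
noncomputable def riffle (k n : ℕ) (π : Equiv.Perm (Fin n)) : ℝ :=
  (Nat.choose (n + k - numDescents n π - 1) n : ℝ) / (k : ℝ) ^ n

/-- The cut-then-k-riffle-shuffle measure
`C_{k,n}(π) = binom(n+k-cd(π)-1, n-1) / (n·k^(n-1))`. -/
noncomputable def cutRiffle (k n : ℕ) (π : Equiv.Perm (Fin n)) : ℝ :=
  (Nat.choose (n + k - numCyclicDescents n π - 1) (n - 1) : ℝ) / ((n : ℝ) * (k : ℝ) ^ (n - 1))

open Finset

/-- Strictly monotone functions `Fin a → Fin b` are counted by `b.choose a`. -/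
lemma card_strictMono_fun (a b : ℕ) :
    Fintype.card {f : Fin a → Fin b // StrictMono f} = b.choose a := by
  have e : {f : Fin a → Fin b // StrictMono f} ≃ {s : Finset (Fin b) // s.card = a} :=
  { toFun := fun f => ⟨Finset.univ.image f.1, by
      rw [Finset.card_image_of_injective _ f.2.injective, Finset.card_univ, Fintype.card_fin]⟩
    invFun := fun s => ⟨s.1.orderEmbOfFin s.2, (s.1.orderEmbOfFin s.2).strictMono⟩
    left_inv := fun f => by
      apply Subtype.ext
      exact (Finset.orderEmbOfFin_unique _ (fun x => Finset.mem_image_of_mem _ (mem_univ x))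
        f.2).symm
    right_inv := fun s => by
      apply Subtype.ext
      rw [← Finset.coe_inj, Finset.coe_image, Finset.coe_univ, Set.image_univ]
      exact Finset.range_orderEmbOfFin s.1 s.2 }
  rw [Fintype.card_congr e, Fintype.card_finset_len, Fintype.card_fin]

lemma strictMono_fin_add_le {n m : ℕ} {f : Fin n → Fin m} (hf : StrictMono f) :
    ∀ (d : ℕ) (i j : Fin n), (j : ℕ) = (i : ℕ) + d → (f i : ℕ) + d ≤ f j := by
  intro d
  induction d with
  | zero =>
    intro i j hj
    have : i = j := Fin.ext (by omega)
    subst this; simp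
  | succ d ih =>
    intro i j hj
    have hlt : (i : ℕ) + d < n := by have := j.isLt; omega
    have h1 := ih i ⟨(i : ℕ) + d, hlt⟩ rfl
    have h2 : f ⟨(i : ℕ) + d, hlt⟩ < f j := hf (by rw [Fin.lt_def]; simp; omega)
    rw [Fin.lt_def] at h2
    omega

/-- Counting monotone functions `Fin (N+1) → Fin k` forced to be strict at positions in `S`. -/
lemma card_mono_strictAt (N k : ℕ) (S : Finset ℕ) (hS : S ⊆ Finset.range N) :
    Fintype.card {g : Fin (N+1) → Fin k //
        Monotone g ∧ ∀ i : Fin N, (i : ℕ) ∈ S → g i.castSucc < g i.succ}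
      = (k + (N - S.card)).choose (N + 1) := by
  classical
  have hcard : S.card ≤ N := le_trans (Finset.card_le_card hS) (by simp)
  set e : ℕ → ℕ := fun i => ((Finset.range i).filter (fun j => ¬ j ∈ S)).card with he
  have he_succ : ∀ i, e (i + 1) = e i + (if i ∈ S then 0 else 1) := by
    intro i
    by_cases hi : i ∈ S <;>
      simp [he, Finset.range_add_one, Finset.filter_insert, hi, Finset.card_insert_of_notMem]
  have he_i : ∀ i, e i + (S.filter (· < i)).card = i := by
    intro i
    have h1 : (Finset.range i).filter (fun j => j ∈ S) = S.filter (· < i) := by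
      ext j; simp [Finset.mem_range, and_comm]
    calc e i + (S.filter (· < i)).card
        = ((Finset.range i).filter (fun j => j ∈ S)).card
          + ((Finset.range i).filter (fun j => ¬ j ∈ S)).card := by rw [h1]; ring
      _ = (Finset.range i).card := Finset.card_filter_add_card_filter_not _
      _ = i := Finset.card_range i
  have hdS : ∀ i, (S.filter (· < i)).card ≤ S.card := fun i =>
    Finset.card_le_card (Finset.filter_subset _ _)
  have he_leN : ∀ i, i ≤ N → e i ≤ N - S.card := by
    intro i hi
    have h1 : e i ≤ e N :=
      Finset.card_le_card (Finset.filter_subset_filter _ (Finset.range_subset_range.2 hi))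
    have h2 : e N = N - S.card := by
      show ((Finset.range N).filter (fun j => ¬ j ∈ S)).card = N - S.card
      rw [← Finset.sdiff_eq_filter, Finset.card_sdiff_of_subset hS, Finset.card_range]
    omega
  have he_le_self : ∀ i, e i ≤ i := by
    intro i
    calc e i ≤ (Finset.range i).card := Finset.card_le_card (Finset.filter_subset _ _)
      _ = i := Finset.card_range i
  let E : {g : Fin (N+1) → Fin k //
        Monotone g ∧ ∀ i : Fin N, (i : ℕ) ∈ S → g i.castSucc < g i.succ}
      ≃ {h : Fin (N+1) → Fin (k + (N - S.card)) // StrictMono h} :=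
  { toFun := fun g => ⟨fun i => ⟨(g.1 i : ℕ) + e i, by
      have h1 : (g.1 i : ℕ) < k := (g.1 i).isLt
      have h2 : e i ≤ N - S.card := he_leN i (by omega)
      omega⟩, by
      rw [Fin.strictMono_iff_lt_succ]
      intro i
      rw [Fin.lt_def]
      show (g.1 i.castSucc : ℕ) + e (i : ℕ) < (g.1 i.succ : ℕ) + e ((i : ℕ) + 1)
      have hes := he_succ (i : ℕ)
      by_cases hi : (i : ℕ) ∈ S
      · have hlt := g.2.2 i hi
        rw [Fin.lt_def] at hlt
        simp [hi] at hes
        omega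
      · have hle := g.2.1 (Fin.castSucc_le_succ i)
        rw [Fin.le_def] at hle
        simp [hi] at hes
        omega⟩
    invFun := fun h => ⟨fun i => ⟨(h.1 i : ℕ) - e i, by
      have hlast := strictMono_fin_add_le h.2 (N - (i : ℕ)) i ⟨N, by omega⟩ (by
        show N = (i : ℕ) + (N - (i : ℕ))
        have := i.isLt
        omega)
      have h1 : (h.1 ⟨N, by omega⟩ : ℕ) < k + (N - S.card) := (h.1 _).isLt
      have h2 := he_i (i : ℕ)
      have h3 := hdS (i : ℕ)
      have h4 := i.isLt
      have h0 : (i : ℕ) ≤ (h.1 i : ℕ) := by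
        have := strictMono_fin_add_le h.2 (i : ℕ) ⟨0, by omega⟩ i (by
          show (i : ℕ) = 0 + (i : ℕ); omega)
        omega
      omega⟩, by
      have key : ∀ i : Fin N, (i : ℕ) ≤ (h.1 i.castSucc : ℕ) := by
        intro i
        have := strictMono_fin_add_le h.2 (i : ℕ) ⟨0, by omega⟩ i.castSucc (by simp)
        omega
      constructor
      · rw [Fin.monotone_iff_le_succ]
        intro i
        rw [Fin.le_def]
        show (h.1 i.castSucc : ℕ) - e (i : ℕ) ≤ (h.1 i.succ : ℕ) - e ((i : ℕ) + 1)
        have hstep := h.2 (Fin.castSucc_lt_succ : i.castSucc < i.succ)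
        rw [Fin.lt_def] at hstep
        have hes := he_succ (i : ℕ)
        have hle := key i
        have := he_le_self (i : ℕ)
        by_cases hi : (i : ℕ) ∈ S <;> simp [hi] at hes <;> omega
      · intro i hi
        rw [Fin.lt_def]
        show (h.1 i.castSucc : ℕ) - e (i : ℕ) < (h.1 i.succ : ℕ) - e ((i : ℕ) + 1)
        have hstep := h.2 (Fin.castSucc_lt_succ : i.castSucc < i.succ)
        rw [Fin.lt_def] at hstep
        have hes := he_succ (i : ℕ)
        simp [hi] at hes
        have hle := key i
        have := he_le_self (i : ℕ)
        omega⟩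
    left_inv := fun g => by
      apply Subtype.ext
      funext i
      apply Fin.ext
      show ((g.1 i : ℕ) + e (i : ℕ)) - e (i : ℕ) = (g.1 i : ℕ)
      omega
    right_inv := fun h => by
      apply Subtype.ext
      funext i
      apply Fin.ext
      have hle : (i : ℕ) ≤ (h.1 i : ℕ) := by
        have := strictMono_fin_add_le h.2 (i : ℕ) ⟨0, by omega⟩ i (by
          show (i : ℕ) = 0 + (i : ℕ); omega)
        omega
      have := he_le_self (i : ℕ)
      show ((h.1 i : ℕ) - e (i : ℕ)) + e (i : ℕ) = (h.1 i : ℕ)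
      omega }
  rw [Fintype.card_congr E, card_strictMono_fun]

lemma card_sort_fiber (N k : ℕ) (π : Equiv.Perm (Fin (N+1))) :
    Fintype.card {w : Fin (N+1) → Fin k // Tuple.sort w = π}
      = (k + (N - numDescents (N+1) π)).choose (N+1) := by
  classical
  set S : Finset ℕ := (Finset.range N).filter (fun i =>
    ∃ h : i + 1 < N + 1, π ⟨i + 1, h⟩ < π ⟨i, Nat.lt_of_succ_lt h⟩) with hSdef
  have hSsub : S ⊆ Finset.range N := Finset.filter_subset _ _
  have hnum : numDescents (N+1) π = S.card := by
    simp only [numDescents, hSdef, Nat.add_sub_cancel]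
  have hmem : ∀ i : Fin N, ((i : ℕ) ∈ S ↔ π i.succ < π i.castSucc) := by
    intro i
    rw [hSdef, Finset.mem_filter]
    simp only [Finset.mem_range, i.isLt, true_and]
    constructor
    · rintro ⟨h, hlt⟩
      exact hlt
    · intro hlt
      exact ⟨Nat.succ_lt_succ i.isLt, hlt⟩
  have E1 : {w : Fin (N+1) → Fin k // Tuple.sort w = π} ≃
      {g : Fin (N+1) → Fin k // Monotone g ∧
        ∀ i j : Fin (N+1), i < j → g i = g j → π i < π j} := by
    have key : ∀ w : Fin (N+1) → Fin k, Tuple.sort w = π ↔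
        (Monotone (w ∘ π) ∧ ∀ i j, i < j → w (π i) = w (π j) → π i < π j) := fun w => by
      rw [eq_comm, Tuple.eq_sort_iff]
    exact
    { toFun := fun w => ⟨w.1 ∘ π, (key w.1).1 w.2⟩
      invFun := fun g => ⟨g.1 ∘ π.symm, by
        rw [key]
        constructor
        · have hc : (g.1 ∘ ⇑π.symm) ∘ ⇑π = g.1 := by funext x; simp
          rw [hc]; exact g.2.1
        · intro i j hij heq
          apply g.2.2 i j hij
          simpa using heq⟩
      left_inv := fun w => by apply Subtype.ext; funext x; simp
      right_inv := fun g => by apply Subtype.ext; funext x; simp }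
  have hiff : ∀ g : Fin (N+1) → Fin k,
      (Monotone g ∧ ∀ i j : Fin (N+1), i < j → g i = g j → π i < π j) ↔
      (Monotone g ∧ ∀ i : Fin N, (i : ℕ) ∈ S → g i.castSucc < g i.succ) := by
    intro g
    constructor
    · rintro ⟨hm, hq⟩
      refine ⟨hm, fun i hi => ?_⟩
      rw [hmem] at hi
      rcases lt_or_eq_of_le (hm (Fin.castSucc_le_succ i)) with h | h
      · exact h
      · exact absurd (hq _ _ (Fin.castSucc_lt_succ : i.castSucc < i.succ) h) (asymm hi)
    · rintro ⟨hm, hp⟩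
      refine ⟨hm, ?_⟩
      have step : ∀ i j : Fin (N+1), (j : ℕ) = (i : ℕ) + 1 → g i = g j → π i < π j := by
        intro i j hj hg
        have hiN : (i : ℕ) < N := by have := j.isLt; omega
        have hci : (⟨(i : ℕ), hiN⟩ : Fin N).castSucc = i := Fin.ext rfl
        have hsi : (⟨(i : ℕ), hiN⟩ : Fin N).succ = j := Fin.ext (by simp [hj])
        have hnotS : (i : ℕ) ∉ S := by
          intro hin
          have := hp ⟨(i : ℕ), hiN⟩ hin
          rw [hci, hsi, hg] at this
          exact lt_irrefl _ this
        have hnd : ¬ (π j < π i) := by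
          intro hlt
          exact hnotS ((hmem ⟨(i : ℕ), hiN⟩).2 (by rw [hci, hsi]; exact hlt))
        have hne : π i ≠ π j := by
          intro h
          have hij : i = j := π.injective h
          rw [hij] at hj; omega
        exact lt_of_le_of_ne (not_lt.mp hnd) hne
      have claim : ∀ (d : ℕ) (i j : Fin (N+1)),
          (j : ℕ) = (i : ℕ) + (d + 1) → g i = g j → π i < π j := by
        intro d
        induction d with
        | zero => intro i j hj hg; exact step i j hj hg
        | succ d ih =>
          intro i j hj hg
          have hlt : (i : ℕ) + 1 < N + 1 := by have := j.isLt; omega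
          set mid : Fin (N+1) := ⟨(i : ℕ) + 1, hlt⟩ with hmid
          have h1 : i ≤ mid := by rw [Fin.le_def]; simp [hmid]
          have h2 : mid ≤ j := by rw [Fin.le_def]; simp [hmid]; omega
          have hg1 : g i = g mid := le_antisymm (hm h1) ((hm h2).trans (le_of_eq hg.symm))
          have hg2 : g mid = g j := by rw [← hg1, hg]
          exact lt_trans (step i mid rfl hg1) (ih mid j (by simp [hmid]; omega) hg2)
      intro i j hij hg
      have hj : (j : ℕ) = (i : ℕ) + (((j : ℕ) - (i : ℕ) - 1) + 1) := by
        rw [Fin.lt_def] at hij; omega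
      exact claim _ i j hj hg
  rw [Fintype.card_congr (E1.trans (Equiv.subtypeEquivRight hiff)),
    card_mono_strictAt N k S hSsub, hnum]

/-- the k-riffle shuffle measure is a probability measure. -/
theorem riffle_sum_eq_one (n k : ℕ) (hn : 1 ≤ n) (hk : 1 ≤ k) :
    ∑ π : Equiv.Perm (Fin n), riffle k n π = 1 := by
  obtain ⟨N, rfl⟩ : ∃ N, n = N + 1 := ⟨n - 1, by omega⟩
  classical
  have hd : ∀ π : Equiv.Perm (Fin (N+1)), numDescents (N+1) π ≤ N := by
    intro π
    calc numDescents (N+1) π ≤ (Finset.range (N+1-1)).card := Finset.card_filter_le _ _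
      _ = N := by simp
  have hnat : ∑ π : Equiv.Perm (Fin (N+1)),
      (k + (N - numDescents (N+1) π)).choose (N+1) = k ^ (N+1) := by
    have hcards := Finset.card_eq_sum_card_fiberwise
      (s := (Finset.univ : Finset (Fin (N+1) → Fin k))) (t := Finset.univ)
      (f := fun w => Tuple.sort w) (fun x _ => Finset.mem_univ _)
    rw [Finset.card_univ, Fintype.card_fun, Fintype.card_fin, Fintype.card_fin] at hcards
    rw [hcards]
    apply Finset.sum_congr rfl
    intro π _
    rw [← Fintype.card_subtype]
    exact (card_sort_fiber N k π).symm
  have hchoose : ∀ π : Equiv.Perm (Fin (N+1)),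
      (N + 1) + k - numDescents (N+1) π - 1 = k + (N - numDescents (N+1) π) := by
    intro π; have := hd π; omega
  have hk0 : (k : ℝ) ≠ 0 := Nat.cast_ne_zero.2 (by omega)
  unfold riffle
  rw [← Finset.sum_div, div_eq_one_iff_eq (pow_ne_zero _ hk0)]
  have hterm : ∀ π ∈ (Finset.univ : Finset (Equiv.Perm (Fin (N+1)))),
      ((((N + 1) + k - numDescents (N+1) π - 1).choose (N+1) : ℕ) : ℝ)
        = (((k + (N - numDescents (N+1) π)).choose (N+1) : ℕ) : ℝ) := fun π _ => by
    rw [hchoose π]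
  rw [Finset.sum_congr rfl hterm, ← Nat.cast_sum, hnat, Nat.cast_pow]
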